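/- Let F = ℂ⟨α, β⟩ with the degree grading giving both generators degree 1, and let ℤ/2 act by swapping α and β. Fix k > 1. Then no element w* = w + w^γ with deg(w) = k+1 can be written as a ℂ-linear combination of products w₁* w₂* with deg(w₁) + deg(w₂) = k+1 and deg(wᵢ) > 0. -/

import Mathlib

/-- The letter-swap on words. -/
def swapWord : FreeMonoid (Fin 2) →* FreeMonoid (Fin 2) :=
  FreeMonoid.map fun i => 1 - i

/-- Interpretation of a word as a product of generators of `ℂ⟨α, β⟩`. -/
noncomputable def wordToAlg : FreeMonoid (Fin 2) →* FreeAlgebra ℂ (Fin 2) :=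
  FreeMonoid.lift (FreeAlgebra.ι ℂ)

/-- `w* = w + w^γ`. -/
noncomputable def wStar (w : FreeMonoid (Fin 2)) : FreeAlgebra ℂ (Fin 2) :=
  wordToAlg w + wordToAlg (swapWord w)

/-- Sign: (-1)^(number of adjacent unequal pairs). -/
def sgn : List (Fin 2) → ℂ
  | [] => 1
  | [_] => 1
  | a :: b :: t => (if a = b then 1 else -1) * sgn (b :: t)

lemma sgn_ne_zero : ∀ l : List (Fin 2), sgn l ≠ 0 := by
  intro l
  induction l using sgn.induct with
  | case1 => simp [sgn]
  | case2 => simp [sgn]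
  | case3 a b t ih =>
    simp only [sgn]
    rcases eq_or_ne a b with h | h <;> simp [h, ih]

lemma sgn_flip : ∀ l : List (Fin 2), sgn (l.map (fun i => 1 - i)) = sgn l := by
  intro l
  induction l using sgn.induct with
  | case1 => rfl
  | case2 => rfl
  | case3 a b t ih =>
    simp only [List.map_cons, sgn] at ih ⊢
    rw [ih]
    congr 1
    have : (1 - a = 1 - b) ↔ (a = b) := by
      constructor <;> intro h
      · fin_cases a <;> fin_cases b <;> simp_all <;> rfl
      · rw [h]
    simp [this]

lemma sgn_key : ∀ (l : List (Fin 2)) (a : Fin 2) (r : List (Fin 2)),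
    sgn (l ++ a :: r) = sgn (l ++ [a]) * sgn (a :: r) := by
  intro l
  induction l with
  | nil => intro a r; simp [sgn]
  | cons c l ih =>
    intro a r
    cases l with
    | nil => simp [sgn]
    | cons d l =>
      have h1 : (c :: d :: l) ++ a :: r = c :: ((d :: l) ++ a :: r) := rfl
      have h2 : (c :: d :: l) ++ [a] = c :: ((d :: l) ++ [a]) := rfl
      rw [h1, h2]
      have e1 : ∀ s : List (Fin 2), sgn (c :: (d :: l) ++ s)
          = (if c = d then 1 else -1) * sgn ((d :: l) ++ s) := by
        intro s; rfl
      rw [show c :: ((d :: l) ++ a :: r) = c :: (d :: l) ++ a :: r from rfl,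
        show c :: ((d :: l) ++ [a]) = c :: (d :: l) ++ [a] from rfl, e1, e1, ih, mul_assoc]

/-- For `k > 1`, no element `w* = w + w^γ` with `deg w = k + 1` is a ℂ-linear combination of
products `w₁* w₂*` with `deg w₁ + deg w₂ = k + 1` and both degrees positive. -/
theorem stmt2 (k : ℕ) (hk : 1 < k) (w : FreeMonoid (Fin 2))
    (hw : (FreeMonoid.toList w).length = k + 1) :
    wStar w ∉ Submodule.span ℂ
      {x : FreeAlgebra ℂ (Fin 2) | ∃ w₁ w₂ : FreeMonoid (Fin 2),
        0 < (FreeMonoid.toList w₁).length ∧ 0 < (FreeMonoid.toList w₂).length ∧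
        (FreeMonoid.toList w₁).length + (FreeMonoid.toList w₂).length = k + 1 ∧
        x = wStar w₁ * wStar w₂} := by
  classical
  set n := k + 1
  -- the coefficient functional
  set g : FreeMonoid (Fin 2) → ℂ :=
    fun u => if (FreeMonoid.toList u).length = n then sgn (FreeMonoid.toList u) else 0 with hg
  set L0 : MonoidAlgebra ℂ (FreeMonoid (Fin 2)) →ₗ[ℂ] ℂ :=
    Finsupp.lsum ℂ (fun u => g u • (LinearMap.id : ℂ →ₗ[ℂ] ℂ)) ∘ₗ
      (MonoidAlgebra.coeffLinearEquiv ℂ).toLinearMap with hL0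
  set L : FreeAlgebra ℂ (Fin 2) →ₗ[ℂ] ℂ :=
    L0 ∘ₗ (FreeAlgebra.equivMonoidAlgebraFreeMonoid (R := ℂ) (X := Fin 2)).toLinearMap with hL
  -- equiv sends wordToAlg u to single u 1
  have hequiv : ∀ u : FreeMonoid (Fin 2),
      FreeAlgebra.equivMonoidAlgebraFreeMonoid (wordToAlg u)
        = MonoidAlgebra.of ℂ (FreeMonoid (Fin 2)) u := by
    intro u
    refine FreeMonoid.recOn u ?_ ?_
    · rw [map_one, map_one]
      exact MonoidAlgebra.one_def
    · intro x y ih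
      rw [map_mul, map_mul, map_mul, ih]
      congr 1
      simp [wordToAlg, FreeAlgebra.equivMonoidAlgebraFreeMonoid]
  have hLword : ∀ u : FreeMonoid (Fin 2), L (wordToAlg u) = g u := by
    intro u
    rw [hL, LinearMap.comp_apply, AlgEquiv.toLinearMap_apply, hequiv u, MonoidAlgebra.of_apply]
    show L0 (MonoidAlgebra.single u 1) = g u
    rw [hL0, LinearMap.comp_apply, LinearEquiv.coe_coe, MonoidAlgebra.coeffLinearEquiv_apply,
      MonoidAlgebra.coeff_single]
    erw [Finsupp.lsum_single]
    simp
  intro hmem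
  have hker : Submodule.span ℂ
      {x : FreeAlgebra ℂ (Fin 2) | ∃ w₁ w₂ : FreeMonoid (Fin 2),
        0 < (FreeMonoid.toList w₁).length ∧ 0 < (FreeMonoid.toList w₂).length ∧
        (FreeMonoid.toList w₁).length + (FreeMonoid.toList w₂).length = n ∧
        x = wStar w₁ * wStar w₂} ≤ LinearMap.ker L := by
    rw [Submodule.span_le]
    rintro x ⟨w₁, w₂, h1, h2, h12, rfl⟩
    simp only [SetLike.mem_coe, LinearMap.mem_ker]
    have expand : wStar w₁ * wStar w₂
        = wordToAlg (w₁ * w₂) + wordToAlg (w₁ * swapWord w₂)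
          + wordToAlg (swapWord w₁ * w₂) + wordToAlg (swapWord w₁ * swapWord w₂) := by
      simp only [wStar, map_mul, add_mul, mul_add]
      abel
    rw [expand]
    simp only [map_add, hLword]
    have hlen : ∀ u : FreeMonoid (Fin 2),
        (FreeMonoid.toList (swapWord u)).length = (FreeMonoid.toList u).length := by
      intro u
      simp [swapWord, FreeMonoid.toList_map]
    have hg' : ∀ u v : FreeMonoid (Fin 2),
        (FreeMonoid.toList u).length + (FreeMonoid.toList v).length = n →
        g (u * v) = sgn (FreeMonoid.toList u ++ FreeMonoid.toList v) := by
      intro u v huv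
      simp [hg, FreeMonoid.toList_mul, huv]
    have hs1 : (FreeMonoid.toList (swapWord w₁)).length + (FreeMonoid.toList w₂).length = n := by
      rw [hlen]; exact h12
    have hs2 : (FreeMonoid.toList w₁).length + (FreeMonoid.toList (swapWord w₂)).length = n := by
      rw [hlen]; exact h12
    have hs3 : (FreeMonoid.toList (swapWord w₁)).length
        + (FreeMonoid.toList (swapWord w₂)).length = n := by
      rw [hlen, hlen]; exact h12
    rw [hg' _ _ h12, hg' _ _ hs2, hg' _ _ hs1, hg' _ _ hs3]
    have hswl : ∀ u : FreeMonoid (Fin 2),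
        FreeMonoid.toList (swapWord u) = (FreeMonoid.toList u).map (fun i => 1 - i) := by
      intro u; simp [swapWord, FreeMonoid.toList_map]
    rw [hswl, hswl]
    obtain ⟨l₁', a, hw₁⟩ : ∃ l a, FreeMonoid.toList w₁ = l ++ [a] := by
      rcases List.eq_nil_or_concat (FreeMonoid.toList w₁) with h | ⟨l, a, h⟩
      · exfalso; rw [h] at h1; simp at h1
      · exact ⟨l, a, h.trans List.concat_eq_append⟩
    obtain ⟨b, t, hw₂⟩ : ∃ b t, FreeMonoid.toList w₂ = b :: t := by
      cases hv : FreeMonoid.toList w₂ with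
      | nil => exfalso; rw [hv] at h2; simp at h2
      | cons b t => exact ⟨b, t, rfl⟩
    rw [hw₁, hw₂]
    have cancel : ∀ (l : List (Fin 2)) (a b : Fin 2) (t : List (Fin 2)),
        sgn ((l ++ [a]) ++ b :: t) + sgn ((l ++ [a]) ++ (b :: t).map (fun i => 1 - i)) = 0 := by
      intro l a b t
      have e1 : (l ++ [a]) ++ b :: t = l ++ a :: (b :: t) := by simp
      have e2 : (l ++ [a]) ++ (b :: t).map (fun i => 1 - i)
          = l ++ a :: ((1 - b) :: t.map (fun i => 1 - i)) := by simp
      rw [e1, e2, sgn_key l a (b :: t), sgn_key l a ((1 - b) :: t.map (fun i => 1 - i))]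
      have e3 : sgn (a :: b :: t) = (if a = b then 1 else -1) * sgn (b :: t) := rfl
      have e4 : sgn (a :: (1 - b) :: t.map (fun i => 1 - i))
          = (if a = 1 - b then 1 else -1) * sgn ((1 - b) :: t.map (fun i => 1 - i)) := rfl
      have e5 : sgn ((1 - b) :: t.map (fun i => 1 - i)) = sgn (b :: t) := by
        have := sgn_flip (b :: t)
        simpa using this
      rw [e3, e4, e5]
      have key : (if a = b then (1:ℂ) else -1) + (if a = 1 - b then 1 else -1) = 0 := by
        fin_cases a <;> fin_cases b <;> norm_num
      linear_combination sgn (l ++ [a]) * sgn (b :: t) * key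
    have flip_eq : sgn (((l₁' ++ [a]).map (fun i => 1 - i)) ++ b :: t)
          + sgn (((l₁' ++ [a]).map (fun i => 1 - i)) ++ (b :: t).map (fun i => 1 - i)) = 0 := by
      have e : (l₁' ++ [a]).map (fun i => 1 - i) = l₁'.map (fun i => 1 - i) ++ [1 - a] := by simp
      rw [e]
      exact cancel _ _ _ _
    linear_combination cancel l₁' a b t + flip_eq
  have hz : L (wStar w) = 0 := hker hmem
  rw [wStar, map_add, hLword, hLword] at hz
  have hswl : FreeMonoid.toList (swapWord w) = (FreeMonoid.toList w).map (fun i => 1 - i) := by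
    simp [swapWord, FreeMonoid.toList_map]
  have h1 : g w = sgn (FreeMonoid.toList w) := by simp [hg, hw]
  have h2 : g (swapWord w) = sgn (FreeMonoid.toList w) := by
    simp [hg, hswl, hw, sgn_flip]
  rw [h1, h2] at hz
  have := sgn_ne_zero (FreeMonoid.toList w)
  apply this
  linear_combination hz / 2
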